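/- arXiv:2308.02975 — 2 statements merged into one kernel-verified Lean document; each statement's English description precedes it below -/
import Mathlib

section
/- Let n, k be integers with ⌊n/2⌋ + 1 ≤ k ≤ n − 2. For each of the k − 1 vectors in the set E₁ = {e(v₁) − e(v_j) : 2 ≤ j ≤ 2k−n+1} ∪ {e(u₁^{(i)}) − e(u₂^{(i)}) : 1 ≤ i ≤ n−k−1}, the adjacency matrix A(𝒢(n,k)) satisfies A x = −x; consequently −1 is an eigenvalue of A(𝒢(n,k)) of multiplicity at least k − 1, and in fact exactly k − 1. -/
open Classical

open Polynomial Matrix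


lemma charpoly_unit_conj {m : Type*} [Fintype m] [DecidableEq m] (P M : Matrix m m ℝ)
    (hP : IsUnit P.det) : (P * M * P⁻¹).charpoly = M.charpoly := by
  unfold Matrix.charpoly
  have h1 : charmatrix (P * M * P⁻¹)
      = (C : ℝ →+* ℝ[X]).mapMatrix P * charmatrix M * (C : ℝ →+* ℝ[X]).mapMatrix P⁻¹ := by
    unfold charmatrix
    rw [Matrix.mul_sub, Matrix.sub_mul, ← _root_.map_mul, ← _root_.map_mul]
    congr 1
    · rw [Matrix.mul_assoc, scalar_commute (X : ℝ[X]) (Commute.all _) _]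
      rw [← Matrix.mul_assoc, ← _root_.map_mul, Matrix.mul_nonsing_inv _ hP]
      simp
  rw [h1, Matrix.det_mul, Matrix.det_mul, ← RingHom.map_det, ← RingHom.map_det]
  rw [mul_comm, ← mul_assoc, ← _root_.map_mul, ← Matrix.det_mul, Matrix.nonsing_inv_mul _ hP]
  simp

lemma charpoly_diag {m : Type*} [Fintype m] [DecidableEq m] (d : m → ℝ) :
    (Matrix.diagonal d).charpoly = ∏ i, (X - C (d i)) := by
  unfold Matrix.charpoly charmatrix
  have : Matrix.scalar m (X : ℝ[X]) - (C : ℝ →+* ℝ[X]).mapMatrix (Matrix.diagonal d)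
      = Matrix.diagonal (fun i => X - C (d i)) := by
    ext i j
    by_cases h : i = j <;> simp [h, Matrix.scalar_apply, Matrix.diagonal_apply]
  rw [this, Matrix.det_diagonal]

lemma rootmult_prod {m : Type*} [Fintype m] [DecidableEq m] (d : m → ℝ) (a : ℝ) :
    (∏ i, (X - C (d i))).rootMultiplicity a = (Finset.univ.filter (fun i => a = d i)).card := by
  have h : (∏ i, (X - C (d i))) = ((Finset.univ.val.map d).map (fun r => X - C r)).prod := by
    rw [Multiset.map_map]
    rfl
  rw [← Polynomial.count_roots, h, roots_multiset_prod_X_sub_C, Multiset.count_map]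
  rfl

lemma rootmult_eq_finrank_ker {m : Type*} [Fintype m] [DecidableEq m] (A : Matrix m m ℝ)
    (hA : A.IsHermitian) (a : ℝ) :
    A.charpoly.rootMultiplicity a = Module.finrank ℝ (LinearMap.ker (A - a • 1).mulVecLin) := by
  classical
  set U : Matrix m m ℝ := (hA.eigenvectorUnitary : Matrix m m ℝ) with hUdef
  set d : m → ℝ := hA.eigenvalues with hddef
  have hU1 : U * star U = 1 := (Matrix.mem_unitaryGroup_iff).mp hA.eigenvectorUnitary.2
  have hU1' : star U * U = 1 := (Matrix.mem_unitaryGroup_iff').mp hA.eigenvectorUnitary.2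
  have hdet : IsUnit U.det := Matrix.isUnit_det_of_right_inverse hU1
  have hinv : U⁻¹ = star U := Matrix.inv_eq_right_inv hU1
  have hcoe : (RCLike.ofReal ∘ d : m → ℝ) = d := funext fun i => rfl
  have hspec : A = U * Matrix.diagonal d * U⁻¹ := by
    rw [hinv]
    have := hA.spectral_theorem
    rwa [hcoe] at this
  have hsub : A - a • 1 = U * Matrix.diagonal (fun i => d i - a) * U⁻¹ := by
    have h2 : Matrix.diagonal (fun i => d i - a) = Matrix.diagonal d - a • 1 := by
      ext i j
      by_cases h : i = j <;> simp [h, Matrix.diagonal_apply, Matrix.one_apply]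
    rw [h2, Matrix.mul_sub, Matrix.sub_mul, ← hspec]
    congr 1
    rw [Matrix.mul_smul, Matrix.smul_mul, Matrix.mul_one, Matrix.mul_nonsing_inv _ hdet]
  -- rootMultiplicity
  have hcp : A.charpoly.rootMultiplicity a
      = (Finset.univ.filter (fun i => a = d i)).card := by
    rw [hspec, charpoly_unit_conj _ _ hdet, charpoly_diag, rootmult_prod]
  -- rank
  have hrank : (A - a • 1).rank = (Finset.univ.filter (fun i => ¬ (a = d i))).card := by
    have hdet' : IsUnit (U⁻¹).det := by
      rw [hinv]; exact Matrix.isUnit_det_of_right_inverse hU1'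
    rw [hsub, Matrix.rank_mul_eq_left_of_isUnit_det _ _ hdet',
      Matrix.rank_mul_eq_right_of_isUnit_det _ _ hdet, Matrix.rank_diagonal,
      Fintype.card_subtype]
    congr 1
    apply Finset.filter_congr
    intro i _
    rw [not_iff_not]
    constructor
    · intro h; linarith
    · intro h; linarith
  have hrn : (A - a • 1).rank + Module.finrank ℝ (LinearMap.ker (A - a • 1).mulVecLin)
      = Fintype.card m := by
    rw [Matrix.rank]
    rw [LinearMap.finrank_range_add_finrank_ker]
    simp [Module.finrank_pi]
  have hsplit : (Finset.univ.filter (fun i => a = d i)).card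
      + (Finset.univ.filter (fun i => ¬ (a = d i))).card = Fintype.card m := by
    rw [Finset.card_filter_add_card_filter_not]
    rfl
  omega


/-- The set of vertices eventually forced blue, starting from the blue set `S`,
under the color-change rule: a blue vertex with exactly one non-blue neighbor
forces that neighbor. -/
inductive SimpleGraph.Forced {V : Type*} (G : SimpleGraph V) (S : Set V) : V → Prop
  | init (v : V) (hv : v ∈ S) : SimpleGraph.Forced G S v
  | force (u w : V) (hu : SimpleGraph.Forced G S u) (hadj : G.Adj u w)
      (hothers : ∀ y, G.Adj u y → y ≠ w → SimpleGraph.Forced G S y) :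
      SimpleGraph.Forced G S w

/-- `S` is a zero forcing set of `G` if starting from `S` blue, every vertex
eventually becomes blue. -/
def SimpleGraph.IsZeroForcingSet {V : Type*} (G : SimpleGraph V) (S : Set V) : Prop :=
  ∀ v, G.Forced S v

/-- The zero forcing number `Z(G)`: the least size of a zero forcing set. -/
noncomputable def SimpleGraph.zeroForcingNumber {V : Type*} (G : SimpleGraph V) : ℕ :=
  sInf {n | ∃ S : Set V, S.ncard = n ∧ G.IsZeroForcingSet S}

/-- The induced subgraph of `G` on `B` is connected and has no cut vertex. -/
def SimpleGraph.IsConnectedNoCutVertexSet {V : Type*} (G : SimpleGraph V) (B : Set V) : Prop :=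
  (G.induce B).Connected ∧ ∀ v ∈ B, B \ {v} = ∅ ∨ (G.induce (B \ {v})).Connected

/-- `B` is (the vertex set of) a block of `G`: a maximal connected subgraph
without cut vertices. -/
def SimpleGraph.IsBlock {V : Type*} (G : SimpleGraph V) (B : Set V) : Prop :=
  G.IsConnectedNoCutVertexSet B ∧
    ∀ C, B ⊆ C → G.IsConnectedNoCutVertexSet C → B = C

/-- `v` is a cut vertex of `G`: `G` is connected but `G - v` is not. -/
def SimpleGraph.IsCutVertex {V : Type*} (G : SimpleGraph V) (v : V) : Prop :=
  G.Connected ∧ ¬ (G.induce ({v}ᶜ : Set V)).Connected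

/-- A clique tree: a connected graph each of whose blocks is a clique. -/
def SimpleGraph.IsCliqueTree {V : Type*} (G : SimpleGraph V) : Prop :=
  G.Connected ∧ ∀ B : Set V, G.IsBlock B → G.IsClique B

/-- The real adjacency matrix of a graph. -/
noncomputable def SimpleGraph.adjMatR {V : Type*} [Fintype V] (G : SimpleGraph V) :
    Matrix V V ℝ :=
  Matrix.of fun i j => if G.Adj i j then (1 : ℝ) else 0

/-- The spectral radius of a (connected) graph: the largest real eigenvalue of
its adjacency matrix. -/
noncomputable def SimpleGraph.specRad {V : Type*} [Fintype V] (G : SimpleGraph V) : ℝ :=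
  sSup {t : ℝ | ∃ x : V → ℝ, x ≠ 0 ∧ G.adjMatR.mulVec x = t • x}

/-- The clique tree `𝒢(n,k)` on vertex set `Fin n`: one block `K_{2k-n+2}`
(on the vertices `0, 1, …, 2k-n+1`) and `n-k-1` triangle blocks (on the vertex
`0` together with the pairs `{2k-n+2i, 2k-n+1+2i}` for `1 ≤ i ≤ n-k-1`), all
sharing the single central cut vertex `0`. -/
def calG (n k : ℕ) : SimpleGraph (Fin n) :=
  SimpleGraph.fromRel (fun i j =>
    (i.val = 0 ∨ j.val = 0) ∨
    (i.val ≤ 2 * k - n + 1 ∧ j.val ≤ 2 * k - n + 1) ∨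
    (2 * k - n + 1 < i.val ∧ 2 * k - n + 1 < j.val ∧
      (i.val - (2 * k - n + 2)) / 2 = (j.val - (2 * k - n + 2)) / 2))
lemma calG_adj (n k : ℕ) (i j : Fin n) : (calG n k).Adj i j ↔
    (i.val ≠ j.val ∧ ((i.val = 0 ∨ j.val = 0) ∨
      (i.val ≤ 2 * k - n + 1 ∧ j.val ≤ 2 * k - n + 1) ∨
      (2 * k - n + 1 < i.val ∧ 2 * k - n + 1 < j.val ∧
        (i.val - (2 * k - n + 2)) / 2 = (j.val - (2 * k - n + 2)) / 2))) := by
  unfold calG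
  rw [SimpleGraph.fromRel_adj]
  simp only [ne_eq, Fin.ext_iff]
  tauto

lemma sum_range_two_mul (g : ℕ → ℝ) (N : ℕ) :
    ∑ j ∈ Finset.range (2 * N), g j = ∑ j ∈ Finset.range N, (g (2 * j) + g (2 * j + 1)) := by
  induction N with
  | zero => simp
  | succ N ih =>
      have h : 2 * (N + 1) = 2 * N + 1 + 1 := by ring
      rw [h, Finset.sum_range_succ, Finset.sum_range_succ, ih, Finset.sum_range_succ]
      ring

lemma sum_fin_eq_sum_range (n : ℕ) (x : Fin n → ℝ) :
    ∑ w, x w = ∑ j ∈ Finset.range n, (fun t => if h : t < n then x ⟨t, h⟩ else 0) j := by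
  calc ∑ w, x w = ∑ w : Fin n, (fun t => if h : t < n then x ⟨t, h⟩ else 0) w.val :=
        Finset.sum_congr rfl (fun w _ => by
          show x w = if h : w.val < n then x ⟨w.val, h⟩ else 0
          rw [dif_pos w.isLt])
    _ = _ := Fin.sum_univ_eq_sum_range (fun t => if h : t < n then x ⟨t, h⟩ else 0) n

lemma sum_filter_le_eq (n mm : ℕ) (hmn : mm < n) (x : Fin n → ℝ) :
    ∑ j ∈ Finset.univ.filter (fun j : Fin n => j.val ≤ mm), x j
      = ∑ j ∈ Finset.range (mm + 1), (fun t => if h : t < n then x ⟨t, h⟩ else 0) j := by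
  calc ∑ j ∈ Finset.univ.filter (fun j : Fin n => j.val ≤ mm), x j
      = ∑ j : Fin n, (if j.val ≤ mm then x j else 0) := Finset.sum_filter _ _
    _ = ∑ j : Fin n,
        (fun t => if t ≤ mm then (if h : t < n then x ⟨t, h⟩ else 0) else 0) j.val :=
        Finset.sum_congr rfl (fun j _ => by
          show _ = if j.val ≤ mm then (if h : j.val < n then x ⟨j.val, h⟩ else 0) else 0
          by_cases h : j.val ≤ mm
          · rw [if_pos h, if_pos h, dif_pos j.isLt]
          · rw [if_neg h, if_neg h])
    _ = ∑ t ∈ Finset.range n,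
        (fun t => if t ≤ mm then (if h : t < n then x ⟨t, h⟩ else 0) else 0) t :=
        Fin.sum_univ_eq_sum_range
          (fun t => if t ≤ mm then (if h : t < n then x ⟨t, h⟩ else 0) else 0) n
    _ = ∑ t ∈ (Finset.range n).filter (fun t => t ≤ mm),
        (fun t => if h : t < n then x ⟨t, h⟩ else 0) t := (Finset.sum_filter _ _).symm
    _ = _ := by
        apply Finset.sum_congr _ (fun _ _ => rfl)
        ext t
        simp only [Finset.mem_filter, Finset.mem_range]
        omega

set_option maxHeartbeats 1000000 in
lemma finrank_ker_calG (n k : ℕ) (hk1 : n / 2 + 1 ≤ k) (hk2 : k ≤ n - 2) :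
    Module.finrank ℝ (LinearMap.ker ((calG n k).adjMatR + 1).mulVecLin) = k - 1 := by
  have hn5 : 5 ≤ n := by omega
  have h2k : n + 1 ≤ 2 * k := by omega
  have hkn : k + 2 ≤ n := by omega
  set m := 2 * k - n + 1 with hm
  have hm2 : 2 ≤ m := by omega
  set N := n - k - 1 with hNdef
  have hN1 : 1 ≤ N := by omega
  have hnN : n = m + 1 + 2 * N := by omega
  have hmn : m + 1 < n := by omega
  obtain ⟨v0, hv0val⟩ : ∃ v : Fin n, v.val = 0 := ⟨⟨0, by omega⟩, rfl⟩
  obtain ⟨v1, hv1val⟩ : ∃ v : Fin n, v.val = 1 := ⟨⟨1, by omega⟩, rfl⟩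
  obtain ⟨u1, hu1val⟩ : ∃ u : Fin N → Fin n, ∀ i, (u i).val = m + 1 + 2 * i.val :=
    ⟨fun i => ⟨m + 1 + 2 * i.val, by have := i.isLt; omega⟩, fun i => rfl⟩
  obtain ⟨u2, hu2val⟩ : ∃ u : Fin N → Fin n, ∀ i, (u i).val = m + 2 + 2 * i.val :=
    ⟨fun i => ⟨m + 2 + 2 * i.val, by have := i.isLt; omega⟩, fun i => rfl⟩
  set L : (Fin n → ℝ) →ₗ[ℝ] ℝ × ℝ × (Fin N → ℝ) :=
    LinearMap.prod (LinearMap.proj v0)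
      (LinearMap.prod
        (∑ j ∈ Finset.univ.filter (fun j : Fin n => j.val ≤ m), LinearMap.proj j)
        (LinearMap.pi fun i =>
          (LinearMap.proj v0 : (Fin n → ℝ) →ₗ[ℝ] ℝ) + LinearMap.proj (u1 i)
            + LinearMap.proj (u2 i))) with hLdef
  have hL : ∀ x : Fin n → ℝ, L x =
      (x v0, ∑ j ∈ Finset.univ.filter (fun j : Fin n => j.val ≤ m), x j,
        fun i => x v0 + x (u1 i) + x (u2 i)) := by
    intro x
    rw [hLdef]
    refine Prod.ext_iff.mpr ⟨rfl, Prod.ext_iff.mpr ⟨?_, rfl⟩⟩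
    show (∑ j ∈ Finset.univ.filter (fun j : Fin n => j.val ≤ m),
        (LinearMap.proj j : (Fin n → ℝ) →ₗ[ℝ] ℝ)) x = _
    rw [LinearMap.sum_apply]
    rfl
  -- splitting the full sum
  have hsplit : ∀ x : Fin n → ℝ,
      ∑ w, x w = (∑ j ∈ Finset.univ.filter (fun j : Fin n => j.val ≤ m), x j)
        + ∑ i : Fin N, (x (u1 i) + x (u2 i)) := by
    intro x
    have hpairs : ∑ i : Fin N, (x (u1 i) + x (u2 i))
        = ∑ j ∈ Finset.range N,
            (fun t => (fun s => if h : s < n then x ⟨s, h⟩ else 0) (m + 1 + 2 * t)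
              + (fun s => if h : s < n then x ⟨s, h⟩ else 0) (m + 2 + 2 * t)) j := by
      calc ∑ i : Fin N, (x (u1 i) + x (u2 i))
          = ∑ i : Fin N,
            (fun t => (fun s => if h : s < n then x ⟨s, h⟩ else 0) (m + 1 + 2 * t)
              + (fun s => if h : s < n then x ⟨s, h⟩ else 0) (m + 2 + 2 * t)) i.val :=
            Finset.sum_congr rfl (fun i _ => by
              have hi1 : m + 1 + 2 * i.val < n := by have := i.isLt; omega
              have hi2 : m + 2 + 2 * i.val < n := by have := i.isLt; omega
              show _ = (if h : m + 1 + 2 * i.val < n then x ⟨m + 1 + 2 * i.val, h⟩ else 0)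
                + (if h : m + 2 + 2 * i.val < n then x ⟨m + 2 + 2 * i.val, h⟩ else 0)
              rw [dif_pos hi1, dif_pos hi2]
              exact congrArg₂ (· + ·) (congrArg x (Fin.ext (hu1val i)))
                (congrArg x (Fin.ext (hu2val i))))
        _ = _ := Fin.sum_univ_eq_sum_range
            (fun t => (fun s => if h : s < n then x ⟨s, h⟩ else 0) (m + 1 + 2 * t)
              + (fun s => if h : s < n then x ⟨s, h⟩ else 0) (m + 2 + 2 * t)) N
    rw [sum_fin_eq_sum_range n x, sum_filter_le_eq n m (by omega) x, hpairs]
    rw [show Finset.range n = Finset.range ((m + 1) + 2 * N) from by rw [← hnN]]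
    rw [Finset.sum_range_add]
    congr 1
    calc ∑ j ∈ Finset.range (2 * N),
          (fun t => if h : t < n then x ⟨t, h⟩ else 0) (m + 1 + j)
        = ∑ j ∈ Finset.range N,
            ((fun t => if h : t < n then x ⟨t, h⟩ else 0) (m + 1 + 2 * j)
              + (fun t => if h : t < n then x ⟨t, h⟩ else 0) (m + 1 + (2 * j + 1))) :=
          sum_range_two_mul (fun j => (fun t => if h : t < n then x ⟨t, h⟩ else 0) (m + 1 + j)) N
      _ = _ := Finset.sum_congr rfl (fun j _ => by
          congr 2
          omega)
  -- row formula
  have hrow : ∀ (x : Fin n → ℝ) (u : Fin n),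
      (((calG n k).adjMatR + 1).mulVec x) u
        = x u + ∑ w ∈ Finset.univ.filter (fun w => (calG n k).Adj u w), x w := by
    intro x u
    rw [Matrix.add_mulVec, Matrix.one_mulVec, Pi.add_apply, add_comm]
    congr 1
    rw [Finset.sum_filter]
    show (∑ w, (calG n k).adjMatR u w * x w) = _
    apply Finset.sum_congr rfl
    intro w _
    simp only [SimpleGraph.adjMatR, Matrix.of_apply, ite_mul, one_mul, zero_mul]
  -- filters
  have hfilt0 : Finset.univ.filter (fun w => (calG n k).Adj v0 w) = Finset.univ.erase v0 := by
    ext w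
    have hw := w.isLt
    simp only [Finset.mem_filter, Finset.mem_erase, Finset.mem_univ, and_true, true_and,
      calG_adj, ne_eq, Fin.ext_iff, hv0val, true_or, and_true]
    omega
  have hfiltc : ∀ u : Fin n, 1 ≤ u.val → u.val ≤ m →
      Finset.univ.filter (fun w => (calG n k).Adj u w)
        = (Finset.univ.filter (fun j : Fin n => j.val ≤ m)).erase u := by
    intro u h1 h2
    ext w
    have hw := w.isLt
    simp only [Finset.mem_filter, Finset.mem_erase, Finset.mem_univ, and_true, true_and,
      calG_adj, ne_eq, Fin.ext_iff]
    omega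
  have hfilt1 : ∀ i : Fin N, Finset.univ.filter (fun w => (calG n k).Adj (u1 i) w)
      = {v0, u2 i} := by
    intro i
    ext w
    have hw := w.isLt
    have hi := i.isLt
    simp only [Finset.mem_filter, Finset.mem_insert, Finset.mem_singleton, Finset.mem_univ,
      true_and, calG_adj, ne_eq, Fin.ext_iff, hv0val, hu1val, hu2val]
    omega
  have hfilt2 : ∀ i : Fin N, Finset.univ.filter (fun w => (calG n k).Adj (u2 i) w)
      = {v0, u1 i} := by
    intro i
    ext w
    have hw := w.isLt
    have hi := i.isLt
    simp only [Finset.mem_filter, Finset.mem_insert, Finset.mem_singleton, Finset.mem_univ,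
      true_and, calG_adj, ne_eq, Fin.ext_iff, hv0val, hu1val, hu2val]
    omega
  -- row values
  have hrow0 : ∀ x : Fin n → ℝ, (((calG n k).adjMatR + 1).mulVec x) v0 = ∑ w, x w := by
    intro x
    rw [hrow, hfilt0, Finset.add_sum_erase _ x (Finset.mem_univ v0)]
  have hrowc : ∀ (x : Fin n → ℝ) (u : Fin n), 1 ≤ u.val → u.val ≤ m →
      (((calG n k).adjMatR + 1).mulVec x) u
        = ∑ j ∈ Finset.univ.filter (fun j : Fin n => j.val ≤ m), x j := by
    intro x u h1 h2
    rw [hrow, hfiltc u h1 h2,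
      Finset.add_sum_erase _ x (by simp only [Finset.mem_filter, Finset.mem_univ, true_and]; omega)]
  have hv0u2 : ∀ i : Fin N, v0 ≠ u2 i := by
    intro i h
    have : v0.val = (u2 i).val := by rw [h]
    rw [hv0val, hu2val] at this
    omega
  have hv0u1 : ∀ i : Fin N, v0 ≠ u1 i := by
    intro i h
    have : v0.val = (u1 i).val := by rw [h]
    rw [hv0val, hu1val] at this
    omega
  have hrow1 : ∀ (x : Fin n → ℝ) (i : Fin N),
      (((calG n k).adjMatR + 1).mulVec x) (u1 i) = x (u1 i) + (x v0 + x (u2 i)) := by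
    intro x i
    rw [hrow, hfilt1, Finset.sum_pair (hv0u2 i)]
  have hrow2 : ∀ (x : Fin n → ℝ) (i : Fin N),
      (((calG n k).adjMatR + 1).mulVec x) (u2 i) = x (u2 i) + (x v0 + x (u1 i)) := by
    intro x i
    rw [hrow, hfilt2, Finset.sum_pair (hv0u1 i)]
  -- case trichotomy
  have hcases : ∀ u : Fin n, u = v0 ∨ (1 ≤ u.val ∧ u.val ≤ m)
      ∨ (∃ i, u = u1 i) ∨ (∃ i, u = u2 i) := by
    intro u
    have hu := u.isLt
    by_cases h0 : u.val = 0
    · exact Or.inl (Fin.ext (by rw [h0, hv0val]))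
    by_cases hmle : u.val ≤ m
    · exact Or.inr (Or.inl ⟨by omega, hmle⟩)
    by_cases hpar : (u.val - (m + 1)) % 2 = 0
    · refine Or.inr (Or.inr (Or.inl ⟨⟨(u.val - (m + 1)) / 2, by omega⟩, Fin.ext ?_⟩))
      rw [hu1val]
      show u.val = m + 1 + 2 * ((u.val - (m + 1)) / 2)
      omega
    · refine Or.inr (Or.inr (Or.inr ⟨⟨(u.val - (m + 1)) / 2, by omega⟩, Fin.ext ?_⟩))
      rw [hu2val]
      show u.val = m + 2 + 2 * ((u.val - (m + 1)) / 2)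
      omega
  -- kernel equality
  have hker : LinearMap.ker ((calG n k).adjMatR + 1).mulVecLin = LinearMap.ker L := by
    ext x
    simp only [LinearMap.mem_ker, Matrix.mulVecLin_apply]
    constructor
    · intro h
      have hr : ∀ u, (((calG n k).adjMatR + 1).mulVec x) u = 0 := fun u => congrFun h u
      have hS : ∑ j ∈ Finset.univ.filter (fun j : Fin n => j.val ≤ m), x j = 0 := by
        have := hr v1
        rwa [hrowc x v1 (by rw [hv1val]) (by rw [hv1val]; omega)] at this
      have hT : ∀ i, x v0 + x (u1 i) + x (u2 i) = 0 := by
        intro i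
        have := hr (u1 i)
        rw [hrow1] at this
        linarith
      have hall : ∑ w, x w = 0 := by
        have := hr v0
        rwa [hrow0] at this
      have hx0 : x v0 = 0 := by
        have hpair : ∑ i : Fin N, (x (u1 i) + x (u2 i)) = ∑ _i : Fin N, (-(x v0)) :=
          Finset.sum_congr rfl (fun i _ => by have := hT i; linarith)
        rw [hsplit x, hS, hpair, Finset.sum_const, Finset.card_univ, Fintype.card_fin,
          zero_add, nsmul_eq_mul] at hall
        have hNne : (N : ℝ) ≠ 0 := by
          simp only [ne_eq, Nat.cast_eq_zero]
          omega
        rcases mul_eq_zero.mp hall with h' | h'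
        · exact absurd h' hNne
        · linarith
      rw [hL x]
      exact Prod.ext_iff.mpr ⟨hx0, Prod.ext_iff.mpr ⟨hS, funext (fun i => hT i)⟩⟩
    · intro h
      rw [hL x] at h
      have hx0 : x v0 = 0 := congrArg Prod.fst h
      have hS : ∑ j ∈ Finset.univ.filter (fun j : Fin n => j.val ≤ m), x j = 0 :=
        congrArg (fun p => p.2.1) h
      have hT : ∀ i, x v0 + x (u1 i) + x (u2 i) = 0 := fun i =>
        congrFun (congrArg (fun p => p.2.2) h) i
      funext u
      show (((calG n k).adjMatR + 1).mulVec x) u = 0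
      rcases hcases u with h' | ⟨h1, h2⟩ | ⟨i, rfl⟩ | ⟨i, rfl⟩
      · subst h'
        rw [hrow0, hsplit x, hS]
        have hpair : ∑ i : Fin N, (x (u1 i) + x (u2 i)) = 0 :=
          Finset.sum_eq_zero (fun i _ => by linarith [hT i, hx0])
        rw [hpair]
        ring
      · rw [hrowc x u h1 h2]; exact hS
      · rw [hrow1]; have := hT i; linarith
      · rw [hrow2]; have := hT i; linarith
  -- surjectivity of L
  have hsurj : Function.Surjective L := by
    rintro ⟨a, b, c⟩
    obtain ⟨x, hP1, hP2, hP3, hP4, hP5⟩ :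
        ∃ x : Fin n → ℝ,
          (∀ h : (0:ℕ) < n, x ⟨0, h⟩ = a) ∧
          (∀ h : (1:ℕ) < n, x ⟨1, h⟩ = b - a) ∧
          (∀ (j : ℕ) (h : j < n), 2 ≤ j → j ≤ m → x ⟨j, h⟩ = 0) ∧
          (∀ i, x (u1 i) = c i - a) ∧
          (∀ i, x (u2 i) = 0) := by
      refine ⟨fun j => if j.val = 0 then a else if j.val = 1 then b - a
        else if h : m < j.val ∧ (j.val - (m + 1)) % 2 = 0 then
          c ⟨(j.val - (m + 1)) / 2, by have := j.isLt; omega⟩ - a else 0,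
        ?_, ?_, ?_, ?_, ?_⟩
      · intro h
        simp only [Fin.val_mk]
        simp
      · intro h
        simp only [Fin.val_mk]
        rw [if_neg (by omega)]
        simp
      · intro j h h2 h3
        simp only [Fin.val_mk]
        rw [if_neg (by omega), if_neg (by omega), dif_neg (by omega)]
      · intro i
        simp only [hu1val]
        rw [if_neg (by omega), if_neg (by omega), dif_pos (by omega)]
        congr 2
        apply Fin.ext
        show (m + 1 + 2 * i.val - (m + 1)) / 2 = i.val
        omega
      · intro i
        simp only [hu2val]
        rw [if_neg (by omega), if_neg (by omega), dif_neg (by omega)]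
    refine ⟨x, ?_⟩
    rw [hL]
    refine Prod.ext_iff.mpr ⟨?_, Prod.ext_iff.mpr ⟨?_, ?_⟩⟩
    · show x v0 = a
      have : v0 = ⟨0, by omega⟩ := Fin.ext (by rw [hv0val])
      rw [this]
      exact hP1 _
    · show (∑ j ∈ Finset.univ.filter (fun j : Fin n => j.val ≤ m), x j) = b
      rw [sum_filter_le_eq n m (by omega) x]
      rw [show m + 1 = 2 + (m - 1) from by omega, Finset.sum_range_add]
      have hz : ∑ j ∈ Finset.range (m - 1),
          (fun t => if h : t < n then x ⟨t, h⟩ else 0) (2 + j) = 0 := by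
        apply Finset.sum_eq_zero
        intro j hj
        simp only [Finset.mem_range] at hj
        have hjn : 2 + j < n := by omega
        show (if h : 2 + j < n then x ⟨2 + j, h⟩ else 0) = 0
        rw [dif_pos hjn]
        exact hP3 (2 + j) hjn (by omega) (by omega)
      rw [hz, add_zero, Finset.sum_range_succ, Finset.sum_range_one]
      show (if h : (0:ℕ) < n then x ⟨0, h⟩ else 0) + (if h : (1:ℕ) < n then x ⟨1, h⟩ else 0) = b
      rw [dif_pos (show (0:ℕ) < n by omega), dif_pos (show (1:ℕ) < n by omega)]
      rw [hP1, hP2]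
      ring
    · show (fun i => x v0 + x (u1 i) + x (u2 i)) = c
      funext i
      have : v0 = ⟨0, by omega⟩ := Fin.ext (by rw [hv0val])
      rw [this, hP1, hP4, hP5]
      ring
  -- rank-nullity
  have hrank := LinearMap.finrank_range_add_finrank_ker L
  rw [LinearMap.range_eq_top.mpr hsurj, finrank_top] at hrank
  have hdom : Module.finrank ℝ (Fin n → ℝ) = n := by
    simp [Module.finrank_fintype_fun_eq_card]
  have hcod : Module.finrank ℝ (ℝ × ℝ × (Fin N → ℝ)) = 2 + N := by
    simp [Module.finrank_prod, Module.finrank_fintype_fun_eq_card]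
    omega
  rw [hdom, hcod] at hrank
  rw [hker]
  omega

lemma mulVec_single_sub {V : Type*} [Fintype V] [DecidableEq V] (G : SimpleGraph V) (p q : V)
    (hpq : G.Adj p q) (hsame : ∀ u, u ≠ p → u ≠ q → (G.Adj u p ↔ G.Adj u q)) :
    G.adjMatR.mulVec (Pi.single p (1 : ℝ) - Pi.single q 1) =
      -(Pi.single p (1 : ℝ) - Pi.single q 1) := by
  funext u
  rw [Matrix.mulVec_sub, Matrix.mulVec_single_one, Matrix.mulVec_single_one]
  simp only [Pi.sub_apply, Pi.neg_apply, mul_one, SimpleGraph.adjMatR, Matrix.col_apply, Matrix.of_apply]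
  by_cases hup : u = p
  · subst hup
    rw [if_neg (G.irrefl), if_pos hpq, Pi.single_eq_same,
      Pi.single_eq_of_ne (G.ne_of_adj hpq) 1]
    ring
  · by_cases huq : u = q
    · subst huq
      rw [if_pos hpq.symm, if_neg (G.irrefl), Pi.single_eq_same,
        Pi.single_eq_of_ne (fun h => (G.ne_of_adj hpq) h.symm) 1]
      ring
    · rw [Pi.single_eq_of_ne hup 1, Pi.single_eq_of_ne huq 1]
      by_cases h : G.Adj u p
      · rw [if_pos h, if_pos ((hsame u hup huq).mp h)]; ring
      · rw [if_neg h, if_neg (fun h2 => h ((hsame u hup huq).mpr h2))]; ring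

lemma adjMatR_isHermitian {V : Type*} [Fintype V] (G : SimpleGraph V) :
    G.adjMatR.IsHermitian := by
  ext i j
  simp only [Matrix.conjTranspose_apply, SimpleGraph.adjMatR, Matrix.of_apply, star_trivial]
  rw [SimpleGraph.adj_comm]

/-- For `⌊n/2⌋ + 1 ≤ k ≤ n − 2`, each of the `k − 1` vectors
in `E₁ = {e(v₁) − e(v_j) : 2 ≤ j ≤ 2k−n+1} ∪ {e(u₁⁽ⁱ⁾) − e(u₂⁽ⁱ⁾) : 1 ≤ i ≤ n−k−1}`
satisfies `A x = −x` for `A = A(𝒢(n,k))` (here `v₁` is the vertex `1`,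
`v_j` the vertex `j`, and `u₁⁽ⁱ⁾, u₂⁽ⁱ⁾` the vertices `2k−n+2i, 2k−n+1+2i`);
consequently `−1` is an eigenvalue of `A(𝒢(n,k))` of multiplicity exactly
`k − 1`. -/
theorem eigenvectors_neg_one_calG (n k : ℕ) (hk1 : n / 2 + 1 ≤ k) (hk2 : k ≤ n - 2) :
    (∀ i j : Fin n, i.val = 1 → 2 ≤ j.val → j.val ≤ 2 * k - n + 1 →
      (calG n k).adjMatR.mulVec (Pi.single i (1 : ℝ) - Pi.single j 1) =
        -(Pi.single i (1 : ℝ) - Pi.single j 1)) ∧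
    (∀ p q : Fin n,
      (∃ t : ℕ, 1 ≤ t ∧ t ≤ n - k - 1 ∧
        p.val = 2 * k - n + 2 * t ∧ q.val = 2 * k - n + 1 + 2 * t) →
      (calG n k).adjMatR.mulVec (Pi.single p (1 : ℝ) - Pi.single q 1) =
        -(Pi.single p (1 : ℝ) - Pi.single q 1)) ∧
    (calG n k).adjMatR.charpoly.rootMultiplicity (-1) = k - 1 := by
  have hn : 5 ≤ n ∧ n + 1 ≤ 2 * k ∧ k + 2 ≤ n := by omega
  refine ⟨?_, ?_, ?_⟩
  · intro i j hi hj1 hj2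
    apply mulVec_single_sub
    · rw [calG_adj]
      refine ⟨by omega, ?_⟩
      right; left; omega
    · intro u hup huq
      have h1 : u.val ≠ i.val := fun h => hup (Fin.ext h)
      have h2 : u.val ≠ j.val := fun h => huq (Fin.ext h)
      rw [calG_adj, calG_adj, hi]
      constructor
      · rintro ⟨hne, h⟩
        exact ⟨by omega, by omega⟩
      · rintro ⟨hne, h⟩
        exact ⟨by omega, by omega⟩
  · rintro p q ⟨t, ht1, ht2, hp, hq⟩
    apply mulVec_single_sub
    · rw [calG_adj]
      refine ⟨by omega, ?_⟩
      right; right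
      refine ⟨by omega, by omega, by omega⟩
    · intro u hup huq
      have h1 : u.val ≠ p.val := fun h => hup (Fin.ext h)
      have h2 : u.val ≠ q.val := fun h => huq (Fin.ext h)
      rw [calG_adj, calG_adj]
      constructor
      · rintro ⟨hne, h⟩
        exact ⟨by omega, by omega⟩
      · rintro ⟨hne, h⟩
        exact ⟨by omega, by omega⟩
  · rw [rootmult_eq_finrank_ker _ (adjMatR_isHermitian _) (-1)]
    rw [show (calG n k).adjMatR - (-1 : ℝ) • 1 = (calG n k).adjMatR + 1 from by
      rw [neg_smul, one_smul, sub_neg_eq_add]]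
    exact finrank_ker_calG n k hk1 hk2
end

section
/- Let G be a clique tree containing a triangle block K₃ with two cut vertices u and v, where a block K_l (l ≥ 3) is attached to G at v as a pendant block with cut vertex v. Let x be a Perron vector of G with x_u ≥ x_v, and let G* be the graph obtained from G by moving the block K_l from v to u (deleting all edges from v to the other vertices of K_l and joining those vertices instead to u by a complete set of edges). Then ρ(G*) ≥ ρ(G). -/
open Classical
open Matrix

lemma aux_clique_connected {V : Type*} (G : SimpleGraph V) (S : Set V)
    (hS : G.IsClique S) (hne : S.Nonempty) : (G.induce S).Connected := by
  obtain ⟨q, hq⟩ := hne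
  rw [SimpleGraph.connected_iff]
  refine ⟨?_, ⟨⟨q, hq⟩⟩⟩
  intro a b
  by_cases hab : (a : V) = b
  · rw [Subtype.ext hab]
  · exact (SimpleGraph.Adj.reachable (by exact hS a.2 b.2 hab))

lemma aux_clique_insert_connected {V : Type*} (G : SimpleGraph V) (S : Set V)
    (hS : G.IsClique S) (p q : V) (hq : q ∈ S) (hpq : G.Adj p q) :
    (G.induce (insert p S)).Connected := by
  rw [SimpleGraph.connected_iff]
  have hqmem : q ∈ insert p S := Set.mem_insert_of_mem _ hq
  refine ⟨?_, ⟨⟨p, Set.mem_insert _ _⟩⟩⟩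
  have key : ∀ a : (insert p S : Set V), (G.induce (insert p S)).Reachable a ⟨q, hqmem⟩ := by
    intro ⟨a, ha⟩
    rcases ha with rfl | haS
    · exact SimpleGraph.Adj.reachable (by exact hpq)
    · by_cases hab : a = q
      · exact (Subtype.ext hab : (⟨a, Set.mem_insert_of_mem _ haS⟩ : (insert p S : Set V)) = ⟨q, hqmem⟩) ▸ SimpleGraph.Reachable.refl _
      · exact SimpleGraph.Adj.reachable (by exact hS haS hq hab)
  intro a b
  exact (key a).trans (key b).symm

lemma aux_no_edge {V : Type*} (G : SimpleGraph V)
    (hG : G.IsCliqueTree) (L : Set V) (hL : G.IsBlock L)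
    (u v : V) (huL : u ∉ L) (hvL : v ∈ L) (huvadj : G.Adj u v)
    (w : V) (hwL : w ∈ L) (hwv : w ≠ v) : ¬ G.Adj u w := by
  intro hadj
  have hclique : G.IsClique L := hG.2 L hL
  have hCconn : (G.induce (insert u L)).Connected :=
    aux_clique_insert_connected G L hclique u w hwL hadj
  have hnocut : ∀ z ∈ insert u L, (insert u L) \ {z} = ∅ ∨
      (G.induce ((insert u L) \ {z})).Connected := by
    intro z hz
    refine Or.inr ?_
    rcases hz with rfl | hzL
    · rw [Set.insert_diff_self_of_notMem huL]
      exact aux_clique_connected G L hclique ⟨v, hvL⟩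
    · have huz : u ∉ ({z} : Set V) := by
        simp only [Set.mem_singleton_iff]
        rintro rfl; exact huL hzL
      rw [Set.insert_diff_of_notMem _ huz]
      by_cases hzw : z = w
      · refine aux_clique_insert_connected G _ (hclique.subset Set.diff_subset) u v ?_ huvadj
        exact ⟨hvL, by simp [hzw]; exact fun h => hwv h.symm⟩
      · refine aux_clique_insert_connected G _ (hclique.subset Set.diff_subset) u w ?_ hadj
        exact ⟨hwL, by simp; exact fun h => hzw h.symm⟩
  have heq : L = insert u L := hL.2 _ (Set.subset_insert u L) ⟨hCconn, hnocut⟩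
  exact huL (heq ▸ Set.mem_insert u L)

lemma aux_top_eigen {V : Type*} [Fintype V] [Nonempty V] (B : Matrix V V ℝ)
    (hB : B.IsHermitian) :
    ∃ μ : ℝ, (∃ y : V → ℝ, y ≠ 0 ∧ B.mulVec y = μ • y) ∧
      ∀ z : V → ℝ, z ⬝ᵥ (B.mulVec z) ≤ μ * (z ⬝ᵥ z) := by
  classical
  have b := hB.eigenvectorBasis
  obtain ⟨i, -, hi⟩ := Finset.exists_mem_eq_sup' Finset.univ_nonempty hB.eigenvalues
  have hle : ∀ j, hB.eigenvalues j ≤ hB.eigenvalues i := by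
    intro j; rw [← hi]; exact Finset.le_sup' _ (Finset.mem_univ j)
  have hsym : ∀ a c, B a c = B c a := by
    intro a c
    have := congrFun (congrFun hB.symm a) c
    simpa [Matrix.conjTranspose_apply] using this
  have hvm : ∀ y : V → ℝ, y ᵥ* B = B *ᵥ y := by
    intro y; ext j
    simp only [Matrix.vecMul, Matrix.mulVec, dotProduct]
    exact Finset.sum_congr rfl fun k _ => by rw [hsym j k]; ring
  refine ⟨hB.eigenvalues i, ⟨⇑(hB.eigenvectorBasis i), ?_, ?_⟩, ?_⟩
  · intro h0
    exact hB.eigenvectorBasis.orthonormal.ne_zero i (by ext j; exact congrFun h0 j)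
  · exact hB.mulVec_eigenvectorBasis i
  · intro z
    have hBz : ∀ j, (⇑(hB.eigenvectorBasis j)) ⬝ᵥ (B *ᵥ z)
        = hB.eigenvalues j * ((⇑(hB.eigenvectorBasis j)) ⬝ᵥ z) := by
      intro j
      rw [Matrix.dotProduct_mulVec, hvm, hB.mulVec_eigenvectorBasis j,
        smul_dotProduct, smul_eq_mul]
    have key := hB.eigenvectorBasis.sum_inner_mul_inner
      (WithLp.toLp 2 z : EuclideanSpace ℝ V) (WithLp.toLp 2 (B *ᵥ z) : EuclideanSpace ℝ V)
    have key2 := hB.eigenvectorBasis.sum_inner_mul_inner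
      (WithLp.toLp 2 z : EuclideanSpace ℝ V) (WithLp.toLp 2 z : EuclideanSpace ℝ V)
    simp only [PiLp.inner_apply, PiLp.toLp_apply, RCLike.inner_apply', conj_trivial] at key key2
    -- key : ∑ j, (∑ k, z k * b j k) * (∑ k, b j k * (B *ᵥ z) k) = ∑ k, z k * (B *ᵥ z) k
    have hd : ∀ (y w : V → ℝ), y ⬝ᵥ w = ∑ k, y k * w k := fun _ _ => rfl
    rw [hd, hd, ← key2, ← key]
    have e1 : ∀ j, (∑ k, (hB.eigenvectorBasis j) k * (B *ᵥ z) k)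
        = hB.eigenvalues j * (∑ k, (hB.eigenvectorBasis j) k * z k) := fun j => hBz j
    calc ∑ j, (∑ k, z k * (hB.eigenvectorBasis j) k) * (∑ k, (hB.eigenvectorBasis j) k * (B *ᵥ z) k)
        = ∑ j, hB.eigenvalues j * (∑ k, (hB.eigenvectorBasis j) k * z k)^2 := by
          refine Finset.sum_congr rfl fun j _ => ?_
          rw [e1 j]
          have : (∑ k, z k * (hB.eigenvectorBasis j) k) = ∑ k, (hB.eigenvectorBasis j) k * z k :=
            Finset.sum_congr rfl fun k _ => mul_comm _ _
          rw [this]; ring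
      _ ≤ ∑ j, hB.eigenvalues i * (∑ k, (hB.eigenvectorBasis j) k * z k)^2 := by
          refine Finset.sum_le_sum fun j _ => ?_
          exact mul_le_mul_of_nonneg_right (hle j) (sq_nonneg _)
      _ = hB.eigenvalues i * ∑ j, (∑ k, z k * (hB.eigenvectorBasis j) k) * (∑ k, (hB.eigenvectorBasis j) k * z k) := by
          rw [Finset.mul_sum]
          refine Finset.sum_congr rfl fun j _ => ?_
          have : (∑ k, z k * (hB.eigenvectorBasis j) k) = ∑ k, (hB.eigenvectorBasis j) k * z k :=
            Finset.sum_congr rfl fun k _ => mul_comm _ _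
          rw [this]; ring

lemma aux_bdd {V : Type*} [Fintype V] (B : Matrix V V ℝ)
    (hB : ∀ i j, |B i j| ≤ 1) :
    BddAbove {t : ℝ | ∃ y : V → ℝ, y ≠ 0 ∧ B.mulVec y = t • y} := by
  classical
  refine ⟨(Fintype.card V : ℝ), fun t ht => ?_⟩
  obtain ⟨y, hy0, hy⟩ := ht
  have hne : (Finset.univ : Finset V).Nonempty := by
    by_contra h
    rw [Finset.not_nonempty_iff_eq_empty] at h
    apply hy0; ext j
    exact absurd (Finset.mem_univ j) (by simp [h])
  obtain ⟨j, -, hj⟩ := Finset.exists_max_image Finset.univ (fun k => |y k|) hne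
  have hyj : 0 < |y j| := by
    rcases Function.ne_iff.1 hy0 with ⟨k, hk⟩
    calc (0:ℝ) < |y k| := abs_pos.2 hk
      _ ≤ |y j| := hj k (Finset.mem_univ k)
  have h1 : |t| * |y j| ≤ (Fintype.card V : ℝ) * |y j| := by
    have h2 : t * y j = ∑ k, B j k * y k := by
      have := congrFun hy j
      simp only [Matrix.mulVec, dotProduct, Pi.smul_apply, smul_eq_mul] at this
      rw [this]
    calc |t| * |y j| = |t * y j| := (abs_mul t (y j)).symm
      _ = |∑ k, B j k * y k| := by rw [h2]
      _ ≤ ∑ k, |B j k * y k| := Finset.abs_sum_le_sum_abs _ _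
      _ ≤ ∑ _k : V, |y j| := by
          refine Finset.sum_le_sum fun k _ => ?_
          rw [abs_mul]
          calc |B j k| * |y k| ≤ 1 * |y j| :=
            mul_le_mul (hB j k) (hj k (Finset.mem_univ k)) (abs_nonneg _) zero_le_one
            _ = |y j| := one_mul _
      _ = (Fintype.card V : ℝ) * |y j| := by
          rw [Finset.sum_const, Finset.card_univ, nsmul_eq_mul]
  have := le_of_mul_le_mul_right h1 hyj
  exact le_trans (le_abs_self t) this

lemma aux_entry_diff {V : Type*} [Fintype V] (G Gstar : SimpleGraph V) (W : Set V)
    (u v : V) (huv : u ≠ v) (huW : u ∉ W) (hvW : v ∉ W)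
    (hadjuv : G.Adj u v) (hadjvw : ∀ w ∈ W, G.Adj v w) (hnadjuw : ∀ w ∈ W, ¬ G.Adj u w)
    (hstar : ∀ i j : V, Gstar.Adj i j ↔
      ((G.Adj i j ∧ ¬((i = v ∧ j ∈ W) ∨ (j = v ∧ i ∈ W))) ∨
        (((i = u ∧ j ∈ W) ∨ (j = u ∧ i ∈ W)) ∧ i ≠ j))) :
    ∀ i j : V, Gstar.adjMatR i j = G.adjMatR i j +
      ((if i = u ∧ j ∈ W then (1:ℝ) else 0) + (if j = u ∧ i ∈ W then 1 else 0)
        - (if i = v ∧ j ∈ W then 1 else 0) - (if j = v ∧ i ∈ W then 1 else 0)) := by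
  have hadjwv : ∀ w ∈ W, G.Adj w v := fun w hw => (hadjvw w hw).symm
  have hnadjwu : ∀ w ∈ W, ¬ G.Adj w u := fun w hw h => hnadjuw w hw h.symm
  have hGirr : ∀ a : V, ¬ G.Adj a a := fun a => G.irrefl
  have hvu : v ≠ u := huv.symm
  have hWu : ∀ w ∈ W, ¬ (u = w) := fun w hw h => huW (h ▸ hw)
  have hWu' : ∀ w ∈ W, ¬ (w = u) := fun w hw h => huW (h ▸ hw)
  have hWv : ∀ w ∈ W, ¬ (v = w) := fun w hw h => hvW (h ▸ hw)
  have hWv' : ∀ w ∈ W, ¬ (w = v) := fun w hw h => hvW (h ▸ hw)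
  intro i j
  simp only [SimpleGraph.adjMatR, Matrix.of_apply, hstar]
  by_cases hiW : i ∈ W <;> by_cases hjW : j ∈ W <;>
    by_cases hiu : i = u <;> by_cases hju : j = u <;>
    by_cases hiv : i = v <;> by_cases hjv : j = v <;>
    simp_all

/-- Let `G` be a clique tree containing a triangle block `T`
with two cut vertices `u, v`, where a block `L ≅ K_l` (`l ≥ 3`) is attached at
`v` as a pendant block with cut vertex `v`.  Let `x` be a Perron vector of `G`
with `x_u ≥ x_v`, and let `G*` be obtained from `G` by moving the block `K_l`
from `v` to `u` (deleting all edges from `v` to the other vertices of `L` and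
joining those vertices instead to `u`).  Then `ρ(G*) ≥ ρ(G)`. -/
theorem specRad_le_move_pendant_block {V : Type*} [Fintype V]
    (G : SimpleGraph V) (hG : G.IsCliqueTree)
    (T : Set V) (hT : G.IsBlock T) (hT3 : T.ncard = 3)
    (u v : V) (hu : u ∈ T) (hv : v ∈ T) (huv : u ≠ v)
    (hcu : G.IsCutVertex u) (hcv : G.IsCutVertex v)
    (l : ℕ) (hl : 3 ≤ l)
    (L : Set V) (hL : G.IsBlock L) (hLcard : L.ncard = l)
    (hvL : v ∈ L) (hTL : T ≠ L)
    (hpend : ∀ w ∈ L, G.IsCutVertex w → w = v)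
    (x : V → ℝ) (hx : ∀ w, 0 < x w)
    (heig : G.adjMatR.mulVec x = G.specRad • x)
    (hxuv : x v ≤ x u)
    (Gstar : SimpleGraph V)
    (hGstar : Gstar =
      (G.deleteEdges {e | ∃ w ∈ L \ {v}, e = s(v, w)}) ⊔
        SimpleGraph.fromEdgeSet {e | ∃ w ∈ L \ {v}, e = s(u, w)}) :
    G.specRad ≤ Gstar.specRad := by

  classical
  set W : Set V := L \ {v} with hW
  have hLclique : G.IsClique L := hG.2 L hL
  have hTclique : G.IsClique T := hG.2 T hT
  have hadjuv : G.Adj u v := hTclique hu hv huv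
  have huL : u ∉ L := fun h => huv (hpend u h hcu)
  have hmemW : ∀ w, w ∈ W ↔ (w ∈ L ∧ w ≠ v) := by
    intro w; simp [hW]
  have huW : u ∉ W := fun h => huL ((hmemW u).1 h).1
  have hvW : v ∉ W := fun h => ((hmemW v).1 h).2 rfl
  have hWu : ∀ w ∈ W, w ≠ u := fun w hw h => huW (h ▸ hw)
  have hWv : ∀ w ∈ W, w ≠ v := fun w hw => ((hmemW w).1 hw).2
  have hadjvw : ∀ w ∈ W, G.Adj v w := fun w hw =>
    hLclique hvL ((hmemW w).1 hw).1 (Ne.symm (hWv w hw))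
  have hadjwv : ∀ w ∈ W, G.Adj w v := fun w hw => (hadjvw w hw).symm
  have hnadjuw : ∀ w ∈ W, ¬ G.Adj u w := fun w hw =>
    aux_no_edge G hG L hL u v huL hvL hadjuv w ((hmemW w).1 hw).1 (hWv w hw)
  have hnadjwu : ∀ w ∈ W, ¬ G.Adj w u := fun w hw h => hnadjuw w hw h.symm
  have hGirr : ∀ a : V, ¬ G.Adj a a := fun a => G.irrefl
  have hvu : v ≠ u := huv.symm
  -- membership in the edge sets
  have hmemD : ∀ (a i j : V),
      (s(i, j) ∈ {e | ∃ w ∈ L \ {v}, e = s(a, w)}) ↔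
        ((i = a ∧ j ∈ W) ∨ (j = a ∧ i ∈ W)) := by
    intro a i j
    constructor
    · rintro ⟨w, hw, he⟩
      rcases Sym2.eq_iff.1 he with ⟨rfl, rfl⟩ | ⟨rfl, rfl⟩
      · exact Or.inl ⟨rfl, hw⟩
      · exact Or.inr ⟨rfl, hw⟩
    · rintro (⟨rfl, hj⟩ | ⟨rfl, hi⟩)
      · exact ⟨j, hj, rfl⟩
      · exact ⟨i, hi, Sym2.eq_swap.symm⟩
  have hadj_star : ∀ i j : V, Gstar.Adj i j ↔
      ((G.Adj i j ∧ ¬((i = v ∧ j ∈ W) ∨ (j = v ∧ i ∈ W))) ∨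
        (((i = u ∧ j ∈ W) ∨ (j = u ∧ i ∈ W)) ∧ i ≠ j)) := by
    intro i j
    rw [hGstar]
    simp only [SimpleGraph.sup_adj, SimpleGraph.deleteEdges_adj,
      SimpleGraph.fromEdgeSet_adj]
    rw [show ({e | ∃ w ∈ L \ {v}, e = s(v, w)} : Set (Sym2 V)) =
      {e | ∃ w ∈ L \ {v}, e = s(v, w)} from rfl]
    constructor
    · rintro (⟨h1, h2⟩ | ⟨h1, h2⟩)
      · exact Or.inl ⟨h1, fun hc => h2 ((hmemD v i j).2 hc)⟩
      · exact Or.inr ⟨(hmemD u i j).1 h1, h2⟩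
    · rintro (⟨h1, h2⟩ | ⟨h1, h2⟩)
      · exact Or.inl ⟨h1, fun hc => h2 ((hmemD v i j).1 hc)⟩
      · exact Or.inr ⟨(hmemD u i j).2 h1, h2⟩
  -- entrywise difference of adjacency matrices
  have hdiff := aux_entry_diff G Gstar W u v huv huW hvW hadjuv hadjvw hnadjuw hadj_star
  have hnV : Nonempty V := ⟨u⟩
  -- Hermitian-ness of the new adjacency matrix
  have hBH : Gstar.adjMatR.IsHermitian := by
    ext i j
    simp only [Matrix.conjTranspose_apply, SimpleGraph.adjMatR, Matrix.of_apply,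
      star_trivial]
    rw [Gstar.adj_comm]
  obtain ⟨μ, hμeig, hμquad⟩ := aux_top_eigen Gstar.adjMatR hBH
  set S : ℝ := ∑ j, if j ∈ W then x j else 0 with hS
  have hSnn : 0 ≤ S := Finset.sum_nonneg fun j _ => by
    by_cases h : j ∈ W <;> simp [h, (hx j).le]
  have hrow : ∀ i : V, (Gstar.adjMatR.mulVec x) i = (G.adjMatR.mulVec x) i +
      ((if i = u then S else 0) + (if i ∈ W then x u else 0)
        - (if i = v then S else 0) - (if i ∈ W then x v else 0)) := by
    intro i
    have hsummand : ∀ j, Gstar.adjMatR i j * x j = G.adjMatR i j * x j +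
        ((if i = u ∧ j ∈ W then x j else 0) + (if j = u ∧ i ∈ W then x j else 0)
          - (if i = v ∧ j ∈ W then x j else 0) - (if j = v ∧ i ∈ W then x j else 0)) := by
      intro j
      rw [hdiff i j]
      have hite : ∀ (c : Prop) (inst : Decidable c),
          (@ite ℝ c inst 1 0) * x j = (@ite ℝ c inst (x j) 0) := by
        intro c inst; split <;> simp
      rw [add_mul, sub_mul, sub_mul, add_mul, hite, hite, hite, hite]
      congr!
    have s1 : (∑ j, if i = u ∧ j ∈ W then x j else 0) = (if i = u then S else 0) := by
      by_cases hiu : i = u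
      · simp only [hiu, true_and, if_pos, hS]
      · simp only [hiu, false_and, if_false, if_neg hiu, Finset.sum_const_zero]
    have s2 : (∑ j, if j = u ∧ i ∈ W then x j else 0) = (if i ∈ W then x u else 0) := by
      by_cases hiW : i ∈ W
      · simp only [hiW, and_true, if_pos hiW]
        simp [Finset.sum_ite_eq']
      · simp only [hiW, and_false, if_false, if_neg hiW, Finset.sum_const_zero]
    have s3 : (∑ j, if i = v ∧ j ∈ W then x j else 0) = (if i = v then S else 0) := by
      by_cases hiv : i = v
      · simp only [hiv, true_and, if_pos, hS]
      · simp only [hiv, false_and, if_false, if_neg hiv, Finset.sum_const_zero]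
    have s4 : (∑ j, if j = v ∧ i ∈ W then x j else 0) = (if i ∈ W then x v else 0) := by
      by_cases hiW : i ∈ W
      · simp only [hiW, and_true, if_pos hiW]
        simp [Finset.sum_ite_eq']
      · simp only [hiW, and_false, if_false, if_neg hiW, Finset.sum_const_zero]
    calc (Gstar.adjMatR.mulVec x) i = ∑ j, Gstar.adjMatR i j * x j := rfl
      _ = ∑ j, (G.adjMatR i j * x j +
          ((if i = u ∧ j ∈ W then x j else 0) + (if j = u ∧ i ∈ W then x j else 0)
            - (if i = v ∧ j ∈ W then x j else 0) - (if j = v ∧ i ∈ W then x j else 0))) :=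
        Finset.sum_congr rfl fun j _ => hsummand j
      _ = (∑ j, G.adjMatR i j * x j) +
          ((∑ j, if i = u ∧ j ∈ W then x j else 0) + (∑ j, if j = u ∧ i ∈ W then x j else 0)
            - (∑ j, if i = v ∧ j ∈ W then x j else 0)
            - (∑ j, if j = v ∧ i ∈ W then x j else 0)) := by
        rw [Finset.sum_add_distrib, Finset.sum_sub_distrib, Finset.sum_sub_distrib,
          Finset.sum_add_distrib]
      _ = (G.adjMatR.mulVec x) i +
          ((if i = u then S else 0) + (if i ∈ W then x u else 0)
            - (if i = v then S else 0) - (if i ∈ W then x v else 0)) := by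
        rw [s1, s2, s3, s4]; rfl
  -- quadratic form comparison
  have hquad : x ⬝ᵥ (G.adjMatR.mulVec x) ≤ x ⬝ᵥ (Gstar.adjMatR.mulVec x) := by
    have e1 : (∑ i, x i * (if i = u then S else 0)) = x u * S := by
      simp [mul_ite, mul_zero, Finset.sum_ite_eq']
    have e2 : (∑ i, x i * (if i ∈ W then x u else 0)) = S * x u := by
      rw [hS, Finset.sum_mul]
      refine Finset.sum_congr rfl fun i _ => ?_
      by_cases h : i ∈ W <;> simp [h] <;> ring
    have e3 : (∑ i, x i * (if i = v then S else 0)) = x v * S := by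
      simp [mul_ite, mul_zero, Finset.sum_ite_eq']
    have e4 : (∑ i, x i * (if i ∈ W then x v else 0)) = S * x v := by
      rw [hS, Finset.sum_mul]
      refine Finset.sum_congr rfl fun i _ => ?_
      by_cases h : i ∈ W <;> simp [h] <;> ring
    have hexp : x ⬝ᵥ (Gstar.adjMatR.mulVec x) = x ⬝ᵥ (G.adjMatR.mulVec x) +
        (x u * S + S * x u - x v * S - S * x v) := by
      calc x ⬝ᵥ (Gstar.adjMatR.mulVec x) = ∑ i, x i * (Gstar.adjMatR.mulVec x) i := rfl
        _ = ∑ i, (x i * (G.adjMatR.mulVec x) i +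
            (x i * (if i = u then S else 0) + x i * (if i ∈ W then x u else 0)
              - x i * (if i = v then S else 0) - x i * (if i ∈ W then x v else 0))) :=
          Finset.sum_congr rfl fun i _ => by rw [hrow i]; ring
        _ = (∑ i, x i * (G.adjMatR.mulVec x) i) +
            ((∑ i, x i * (if i = u then S else 0)) + (∑ i, x i * (if i ∈ W then x u else 0))
              - (∑ i, x i * (if i = v then S else 0))
              - (∑ i, x i * (if i ∈ W then x v else 0))) := by
          rw [Finset.sum_add_distrib, Finset.sum_sub_distrib, Finset.sum_sub_distrib,
            Finset.sum_add_distrib]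
        _ = x ⬝ᵥ (G.adjMatR.mulVec x) + (x u * S + S * x u - x v * S - S * x v) := by
          rw [e1, e2, e3, e4]; rfl
    rw [hexp]
    nlinarith [hSnn, hxuv]
  -- put everything together
  have hxx : (0:ℝ) < x ⬝ᵥ x := by
    refine Finset.sum_pos (fun i _ => mul_pos (hx i) (hx i)) ⟨u, Finset.mem_univ u⟩
  have hQA : x ⬝ᵥ (G.adjMatR.mulVec x) = G.specRad * (x ⬝ᵥ x) := by
    rw [heig, dotProduct_smul, smul_eq_mul]
  have hρμ : G.specRad ≤ μ := by
    have h1 : G.specRad * (x ⬝ᵥ x) ≤ μ * (x ⬝ᵥ x) := by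
      rw [← hQA]
      exact le_trans hquad (hμquad x)
    exact le_of_mul_le_mul_right h1 hxx
  have hbdd : BddAbove {t : ℝ | ∃ y : V → ℝ, y ≠ 0 ∧ Gstar.adjMatR.mulVec y = t • y} := by
    refine aux_bdd Gstar.adjMatR fun i j => ?_
    simp only [SimpleGraph.adjMatR, Matrix.of_apply]
    by_cases h : Gstar.Adj i j <;> simp [h]
  have hμmem : μ ∈ {t : ℝ | ∃ y : V → ℝ, y ≠ 0 ∧ Gstar.adjMatR.mulVec y = t • y} := hμeig
  exact le_trans hρμ (le_csSup hbdd hμmem)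
end
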